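/- Let K be a number field and β ∈ K with β ≠ 0 and β not a root of unity. Then the set {β' ∈ K : β'^m = β for some positive integer m} is finite. -/

import Mathlib

/-- Let `K` be a number field and `β ∈ K` nonzero and not a root of unity.
Then the set of roots of `β` lying in `K` is finite. -/
theorem stmt1 (K : Type*) [Field K] [NumberField K] (β : K) (hβ0 : β ≠ 0)
    (hβ : ∀ n : ℕ, 1 ≤ n → β ^ n ≠ 1) :
    {β' : K | ∃ m : ℕ, 1 ≤ m ∧ β' ^ m = β}.Finite := by
  have halg : IsAlgebraic ℤ β := by
    rw [IsFractionRing.isAlgebraic_iff ℤ ℚ K]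
    exact Algebra.IsAlgebraic.isAlgebraic β
  obtain ⟨c, hc0, hcx⟩ := halg.exists_integral_multiple
  have hγ : IsIntegral ℤ ((c : K) * β) := by rwa [zsmul_eq_mul] at hcx
  set B : ℝ := 1 + ∑ σ : K →+* ℂ, ‖σ β‖ with hBdef
  have hB1 : (1:ℝ) ≤ B := by
    have : 0 ≤ ∑ σ : K →+* ℂ, ‖σ β‖ := Finset.sum_nonneg fun _ _ => norm_nonneg _
    linarith
  have hBσ : ∀ σ : K →+* ℂ, ‖σ β‖ ≤ B := by
    intro σ
    have := Finset.single_le_sum (f := fun σ : K →+* ℂ => ‖σ β‖)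
      (fun _ _ => norm_nonneg _) (Finset.mem_univ σ)
    linarith
  have hcK : (c : K) ≠ 0 := Int.cast_ne_zero.mpr hc0
  have hcR : (1:ℝ) ≤ |(c:ℝ)| := by
    rw [← Int.cast_abs]
    exact_mod_cast Int.one_le_abs hc0
  apply Set.Finite.subset (((NumberField.Embeddings.finite_of_norm_le K ℂ
    (|(c:ℝ)| * B)).image (fun x => x / (c : K))))
  rintro β' ⟨m, hm1, hm⟩
  have hm0 : m ≠ 0 := by omega
  refine ⟨(c : K) * β', ⟨?_, ?_⟩, by field_simp⟩
  · refine IsIntegral.of_pow (Nat.pos_of_ne_zero hm0) ?_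
    have heq : ((c:K) * β') ^ m = ((c ^ (m-1) : ℤ) : K) * ((c:K) * β) := by
      rw [mul_pow, hm]
      push_cast
      rw [← pow_sub_one_mul hm0 ((c:K))]
      ring
    rw [heq]
    have hint : IsIntegral ℤ (((c ^ (m-1) : ℤ) : K)) := by
      rw [← eq_intCast (algebraMap ℤ K)]
      exact isIntegral_algebraMap
    exact hint.mul hγ
  · intro φ
    have h1 : ‖φ ((c:K))‖ = |(c:ℝ)| := by
      rw [map_intCast]
      simp
    have key : ‖φ ((c:K) * β')‖ ^ m ≤ (|(c:ℝ)| * B) ^ m := by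
      rw [← norm_pow, ← map_pow, mul_pow, hm, map_mul, norm_mul, map_pow, norm_pow, h1]
      calc |(c:ℝ)| ^ m * ‖φ β‖ ≤ |(c:ℝ)| ^ m * B ^ m := by
            have h2 : ‖φ β‖ ≤ B ^ m := (hBσ φ).trans (le_self_pow₀ hB1 hm0)
            exact mul_le_mul_of_nonneg_left h2 (by positivity)
        _ = (|(c:ℝ)| * B) ^ m := (mul_pow _ _ _).symm
    exact le_of_pow_le_pow_left₀ hm0 (mul_nonneg (abs_nonneg _) (by linarith)) key
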